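/- Let n ≥ 2 and let d_1, …, d_n be positive integers with ∑_{i=1}^n d_i = 2(n − 1). Then the number of trees on the labeled vertex set {1, …, n} in which vertex i has degree exactly d_i for every i equals (n − 2)! / ∏_{i=1}^n (d_i − 1)!. -/

import Mathlib

open scoped Classical

/-- Graphs on a finite vertex set `B`, encoded as finsets of non-diagonal edges with
both endpoints in `B`. -/
noncomputable def graphsOn {V : Type*} [Fintype V] [DecidableEq V] (B : Finset V) :
    Finset (Finset (Sym2 V)) :=
  B.sym2.powerset.filter fun G => ∀ e ∈ G, ¬ e.IsDiag

/-- The edge set `G` connects all the vertices of `B`. -/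
def ConnOn {V : Type*} (B : Finset V) (G : Finset (Sym2 V)) : Prop :=
  ∀ x ∈ B, ∀ y ∈ B, (SimpleGraph.fromEdgeSet (G : Set (Sym2 V))).Reachable x y

/-- Connected graphs on `B`. -/
noncomputable def connGraphsOn {V : Type*} [Fintype V] [DecidableEq V] (B : Finset V) :
    Finset (Finset (Sym2 V)) :=
  (graphsOn B).filter fun G => ConnOn B G

/-- Trees (minimally connected graphs) on `B`: connected graphs with `|B| - 1` edges. -/
noncomputable def treesOn {V : Type*} [Fintype V] [DecidableEq V] (B : Finset V) :
    Finset (Finset (Sym2 V)) :=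
  (connGraphsOn B).filter fun G => G.card = B.card - 1

open scoped Nat


lemma multinomial_rec {V : Type*} [DecidableEq V] (s : Finset V) (f : V → ℕ)
    (h : 0 < ∑ i ∈ s, f i) :
    Nat.multinomial s f =
      ∑ w ∈ s.filter (fun w => 1 ≤ f w), Nat.multinomial s (Function.update f w (f w - 1)) := by
  have hP : 0 < ∏ i ∈ s, (f i)! := Finset.prod_pos fun i _ => Nat.factorial_pos _
  refine Nat.eq_of_mul_eq_mul_left hP ?_
  rw [Nat.multinomial_spec, Finset.mul_sum]
  have key : ∀ w ∈ s.filter (fun w => 1 ≤ f w),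
      (∏ i ∈ s, (f i)!) * Nat.multinomial s (Function.update f w (f w - 1))
        = f w * (∑ i ∈ s, f i - 1)! := by
    intro w hw
    rw [Finset.mem_filter] at hw
    obtain ⟨hws, hfw⟩ := hw
    have hprod : (∏ i ∈ s, (f i)!) = f w * ∏ i ∈ s, (Function.update f w (f w - 1) i)! := by
      rw [← Finset.mul_prod_erase s _ hws, ← Finset.mul_prod_erase s
        (fun i => (Function.update f w (f w - 1) i)!) hws, Function.update_self, ← mul_assoc]
      congr 1
      · exact (Nat.mul_factorial_pred (by omega)).symm
      · exact Finset.prod_congr rfl fun i hi => by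
          rw [Function.update_of_ne (Finset.ne_of_mem_erase hi)]
    have hsum : ∑ i ∈ s, Function.update f w (f w - 1) i = ∑ i ∈ s, f i - 1 := by
      rw [← Finset.add_sum_erase s _ hws, ← Finset.add_sum_erase s f hws, Function.update_self]
      have : ∑ i ∈ s.erase w, Function.update f w (f w - 1) i = ∑ i ∈ s.erase w, f i :=
        Finset.sum_congr rfl fun i hi => by
          rw [Function.update_of_ne (Finset.ne_of_mem_erase hi)]
      omega
    rw [hprod, mul_assoc, Nat.multinomial_spec, hsum]
  rw [Finset.sum_congr rfl key]
  have : ∑ w ∈ s.filter (fun w => 1 ≤ f w), f w * (∑ i ∈ s, f i - 1)!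
      = ∑ w ∈ s, f w * (∑ i ∈ s, f i - 1)! := by
    refine Finset.sum_filter_of_ne fun x _ hx => ?_
    by_contra h'
    simp only [not_le, Nat.lt_one_iff] at h'
    simp [h'] at hx
  rw [this, ← Finset.sum_mul]
  exact (Nat.mul_factorial_pred h.ne').symm ▸ rfl

variable {V : Type*} [Fintype V] [DecidableEq V]

lemma mem_treesOn {B : Finset V} {G : Finset (Sym2 V)} :
    G ∈ treesOn B ↔ G ⊆ B.sym2 ∧ (∀ e ∈ G, ¬ e.IsDiag) ∧ ConnOn B G ∧ G.card = B.card - 1 := by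
  simp only [treesOn, connGraphsOn, graphsOn, Finset.mem_filter, Finset.mem_powerset]
  tauto

/-- In a connected graph on `B` with at least two vertices, every vertex has an incident edge. -/
lemma exists_edge_of_conn {B : Finset V} {G : Finset (Sym2 V)} (hconn : ConnOn B G)
    {v w : V} (hv : v ∈ B) (hw : w ∈ B) (hvw : v ≠ w) : ∃ e ∈ G, v ∈ e := by
  obtain ⟨p⟩ := hconn v hv w hw
  cases p with
  | nil => exact absurd rfl hvw
  | cons h q =>
    rw [SimpleGraph.fromEdgeSet_adj] at h
    exact ⟨_, h.1, Sym2.mem_mk_left _ _⟩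

set_option linter.unusedSectionVars false

/-- Removing a leaf edge keeps the rest connected. -/
lemma conn_erase_leaf {B : Finset V} {G : Finset (Sym2 V)} (hconn : ConnOn B G)
    {v w : V} (hvw : v ≠ w)
    (huniq : ∀ e ∈ G, v ∈ e → e = s(v, w)) :
    ConnOn (B.erase v) (G.erase s(v, w)) := by
  intro x hx y hy
  have hxB := Finset.mem_of_mem_erase hx
  have hyB := Finset.mem_of_mem_erase hy
  have hxv := Finset.ne_of_mem_erase hx
  have hyv := Finset.ne_of_mem_erase hy
  obtain ⟨p⟩ := hconn x hxB y hyB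
  clear hx hy hxB hyB
  set G' : SimpleGraph V := SimpleGraph.fromEdgeSet ((G.erase s(v, w) : Finset (Sym2 V)) : Set (Sym2 V)) with hG'
  -- strong induction on walk length
  suffices H : ∀ L : ℕ, ∀ x : V, x ≠ v →
      ∀ p : (SimpleGraph.fromEdgeSet (G : Set (Sym2 V))).Walk x y, p.length = L →
      G'.Reachable x y from H p.length x hxv p rfl
  intro L
  induction L using Nat.strong_induction_on with
  | _ L IH =>
    intro x hxv p hL
    cases p with
    | nil => exact SimpleGraph.Reachable.refl _
    | @cons _ z _ h q =>
      rw [SimpleGraph.fromEdgeSet_adj] at h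
      obtain ⟨hmem, hne⟩ := h
      by_cases hzv : z = v
      · subst hzv
        -- the edge s(x, z) contains v, so x = w
        have hx_eq : x = w := by
          have := huniq s(x, z) hmem (Sym2.mem_mk_right x z)
          rw [Sym2.eq_iff] at this
          rcases this with ⟨h1, h2⟩ | ⟨h1, h2⟩
          · exact absurd h1 hne
          · exact h1
        cases q with
        | nil => exact absurd rfl hyv
        | @cons _ z2 _ h2 q2 =>
          rw [SimpleGraph.fromEdgeSet_adj] at h2
          obtain ⟨hmem2, hne2⟩ := h2
          have hz2 : z2 = w := by
            have := huniq s(z, z2) hmem2 (Sym2.mem_mk_left z z2)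
            rw [Sym2.eq_iff] at this
            rcases this with ⟨h1, h3⟩ | ⟨h1, h3⟩
            · exact h3
            · exact absurd h3.symm hne2
          subst hz2
          subst hx_eq
          exact IH (L - 2) (by simp at hL; omega) _ hxv q2 (by simp at hL; omega)
      · -- z ≠ v : the edge survives the erasure
        have hstep : G'.Adj x z := by
          rw [hG', SimpleGraph.fromEdgeSet_adj]
          refine ⟨?_, hne⟩
          simp only [Finset.coe_erase, Set.mem_diff, Finset.mem_coe, Set.mem_singleton_iff]
          refine ⟨hmem, fun hc => ?_⟩
          rw [Sym2.eq_iff] at hc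
          rcases hc with ⟨h1, h2⟩ | ⟨h1, h2⟩
          · exact hxv h1
          · exact hzv h2
        exact (hstep.reachable).trans (IH (L - 1) (by simp at hL; omega) z hzv q (by simp at hL; omega))

/-- Adding a leaf edge to a connected graph keeps it connected. -/
lemma conn_insert_leaf {B : Finset V} {G : Finset (Sym2 V)} {v w : V}
    (hv : v ∈ B) (hw : w ∈ B.erase v) (hconn : ConnOn (B.erase v) G) :
    ConnOn B (insert s(v, w) G) := by
  have hmono : SimpleGraph.fromEdgeSet ((G : Finset (Sym2 V)) : Set (Sym2 V))
      ≤ SimpleGraph.fromEdgeSet ((insert s(v, w) G : Finset (Sym2 V)) : Set (Sym2 V)) := by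
    apply SimpleGraph.fromEdgeSet_mono
    simp only [Finset.coe_insert]
    exact Set.subset_insert _ _
  have hvw : v ≠ w := (Finset.ne_of_mem_erase hw).symm
  have hadj : (SimpleGraph.fromEdgeSet ((insert s(v, w) G : Finset (Sym2 V)) : Set (Sym2 V))).Adj v w := by
    rw [SimpleGraph.fromEdgeSet_adj]
    exact ⟨by simp, hvw⟩
  have key : ∀ x ∈ B, (SimpleGraph.fromEdgeSet
      ((insert s(v, w) G : Finset (Sym2 V)) : Set (Sym2 V))).Reachable x w := by
    intro x hx
    by_cases hxv : x = v
    · exact hxv ▸ hadj.reachable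
    · exact (hconn x (Finset.mem_erase.mpr ⟨hxv, hx⟩) w hw).mono hmono
  intro x hx y hy
  exact (key x hx).trans (key y hy).symm

lemma fiber_card {B : Finset V} {v w : V} (hv : v ∈ B) (hw : w ∈ B) (hvw : v ≠ w)
    (d : V → ℕ) (hdv : d v = 1) (hdw : 1 ≤ d w) :
    ((treesOn B).filter (fun T =>
        (∀ i ∈ B, (T.filter fun e => i ∈ e).card = d i) ∧ s(v, w) ∈ T)).card
    = ((treesOn (B.erase v)).filter (fun T => ∀ i ∈ B.erase v,
        (T.filter fun e => i ∈ e).card = Function.update d w (d w - 1) i)).card := by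
  have hB2 : 2 ≤ B.card := Finset.one_lt_card.mpr ⟨v, hv, w, hw, hvw⟩
  have hwB : w ∈ B.erase v := Finset.mem_erase.mpr ⟨Ne.symm hvw, hw⟩
  refine Finset.card_bij' (fun T _ => T.erase s(v, w)) (fun T _ => insert s(v, w) T)
    ?_ ?_ ?_ ?_
  · -- forward map lands in target
    intro T hT
    rw [Finset.mem_filter] at hT
    obtain ⟨hTtree, hdeg, hmem⟩ := hT
    rw [mem_treesOn] at hTtree
    obtain ⟨hsub, hnd, hconn, hcard⟩ := hTtree
    have huniq : ∀ e ∈ T, v ∈ e → e = s(v, w) := by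
      intro e he hve
      have h1 : (T.filter fun e => v ∈ e).card = 1 := by rw [hdeg v hv, hdv]
      obtain ⟨a, ha⟩ := Finset.card_eq_one.mp h1
      have he' : e ∈ T.filter fun e => v ∈ e := Finset.mem_filter.mpr ⟨he, hve⟩
      have hm' : s(v, w) ∈ T.filter fun e => v ∈ e :=
        Finset.mem_filter.mpr ⟨hmem, Sym2.mem_mk_left v w⟩
      rw [ha, Finset.mem_singleton] at he' hm'
      rw [he', hm']
    rw [Finset.mem_filter, mem_treesOn]
    refine ⟨⟨?_, ?_, ?_, ?_⟩, ?_⟩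
    · -- subset
      intro e he
      have heT := Finset.mem_of_mem_erase he
      have hene := Finset.ne_of_mem_erase he
      rw [Finset.mem_sym2_iff]
      intro a hae
      refine Finset.mem_erase.mpr ⟨?_, Finset.mem_sym2_iff.mp (hsub heT) a hae⟩
      rintro rfl
      exact hene (huniq e heT hae)
    · exact fun e he => hnd e (Finset.mem_of_mem_erase he)
    · exact conn_erase_leaf hconn hvw huniq
    · rw [Finset.card_erase_of_mem hmem, hcard, Finset.card_erase_of_mem hv]
    · -- degrees
      intro i hi
      have hiv : i ≠ v := Finset.ne_of_mem_erase hi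
      have hiB : i ∈ B := Finset.mem_of_mem_erase hi
      have hfe : (T.erase s(v, w)).filter (fun e => i ∈ e)
          = (T.filter fun e => i ∈ e).erase s(v, w) := by
        ext e
        simp only [Finset.mem_filter, Finset.mem_erase]
        tauto
      rw [hfe]
      by_cases hiw : i = w
      · subst hiw
        have : s(v, i) ∈ T.filter fun e => i ∈ e :=
          Finset.mem_filter.mpr ⟨hmem, Sym2.mem_mk_right v i⟩
        rw [Finset.card_erase_of_mem this, hdeg i hiB, Function.update_self]
      · rw [Finset.erase_eq_of_notMem, hdeg i hiB, Function.update_of_ne hiw]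
        intro hc
        rw [Finset.mem_filter] at hc
        rcases Sym2.mem_iff.mp hc.2 with h | h
        · exact hiv h
        · exact hiw h
  · -- backward map lands in source
    intro T' hT'
    rw [Finset.mem_filter] at hT'
    obtain ⟨hTtree, hdeg⟩ := hT'
    rw [mem_treesOn] at hTtree
    obtain ⟨hsub, hnd, hconn, hcard⟩ := hTtree
    have hvnot : ∀ e ∈ T', v ∉ e := by
      intro e he hve
      have := Finset.mem_sym2_iff.mp (hsub he) v hve
      exact (Finset.notMem_erase v B) this
    have hnotin : s(v, w) ∉ T' := fun hc => hvnot _ hc (Sym2.mem_mk_left v w)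
    rw [Finset.mem_filter, mem_treesOn]
    refine ⟨⟨?_, ?_, ?_, ?_⟩, ?_, Finset.mem_insert_self _ _⟩
    · intro e he
      rcases Finset.mem_insert.mp he with rfl | he'
      · rw [Finset.mk_mem_sym2_iff]; exact ⟨hv, hw⟩
      · exact Finset.mem_sym2_iff.mpr fun a ha => Finset.mem_of_mem_erase
          (Finset.mem_sym2_iff.mp (hsub he') a ha)
    · intro e he
      rcases Finset.mem_insert.mp he with rfl | he'
      · rw [Sym2.isDiag_iff_proj_eq]; exact hvw
      · exact hnd e he'
    · exact conn_insert_leaf hv hwB hconn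
    · rw [Finset.card_insert_of_notMem hnotin, hcard, Finset.card_erase_of_mem hv]
      omega
    · intro i hiB
      have hfi : (insert s(v, w) T').filter (fun e => i ∈ e)
          = if i ∈ s(v, w) then insert s(v, w) (T'.filter fun e => i ∈ e)
            else T'.filter fun e => i ∈ e := Finset.filter_insert _ _ _
      by_cases hiv : i = v
      · subst hiv
        have hempty : T'.filter (fun e => i ∈ e) = ∅ :=
          Finset.filter_eq_empty_iff.mpr fun {e} he => hvnot e he
        rw [hfi, if_pos (Sym2.mem_mk_left _ _), hempty, hdv]
        simp
      by_cases hiw : i = w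
      · subst hiw
        rw [hfi, if_pos (Sym2.mem_mk_right _ _), Finset.card_insert_of_notMem
          (fun hc => hnotin (Finset.mem_of_mem_filter _ hc)),
          hdeg i (Finset.mem_erase.mpr ⟨hiv, hiB⟩), Function.update_self]
        omega
      · rw [hfi, if_neg (by simp [Sym2.mem_iff]; tauto),
          hdeg i (Finset.mem_erase.mpr ⟨hiv, hiB⟩), Function.update_of_ne hiw]
  · -- left inverse
    intro T hT
    rw [Finset.mem_filter] at hT
    exact Finset.insert_erase hT.2.2
  · -- right inverse
    intro T' hT'
    rw [Finset.mem_filter, mem_treesOn] at hT'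
    apply Finset.erase_insert
    intro hc
    have := Finset.mem_sym2_iff.mp (hT'.1.1 hc) v (Sym2.mem_mk_left v w)
    exact Finset.notMem_erase v B this

lemma trees_deg_zero_empty {B' : Finset V} (h2 : 2 ≤ B'.card) {w : V} (hw : w ∈ B')
    (d' : V → ℕ) (hd'w : d' w = 0) :
    (treesOn B').filter (fun T => ∀ i ∈ B', (T.filter fun e => i ∈ e).card = d' i) = ∅ := by
  rw [Finset.filter_eq_empty_iff]
  intro T hT hdeg
  rw [mem_treesOn] at hT
  obtain ⟨u, hu, huw⟩ := Finset.exists_mem_ne h2 w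
  obtain ⟨e, he, hwe⟩ := exists_edge_of_conn hT.2.2.1 hw hu (Ne.symm huw)
  have : e ∈ T.filter fun e => w ∈ e := Finset.mem_filter.mpr ⟨he, hwe⟩
  have hc := hdeg w hw
  rw [hd'w, Finset.card_eq_zero] at hc
  rw [hc] at this
  exact absurd this (Finset.notMem_empty e)

lemma tree_count : ∀ (m : ℕ) (B : Finset V) (d : V → ℕ), B.card = m → 2 ≤ B.card →
    (∀ i ∈ B, 1 ≤ d i) → ∑ i ∈ B, d i = 2 * (B.card - 1) →
    ((treesOn B).filter (fun T => ∀ i ∈ B, (T.filter fun e => i ∈ e).card = d i)).card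
      = Nat.multinomial B (fun i => d i - 1) := by
  intro m
  induction m using Nat.strong_induction_on with
  | _ m IH =>
    intro B d hm h2 hpos hsum
    by_cases hbase : B.card = 2
    · -- base case : two vertices
      obtain ⟨a, b, hab, rfl⟩ := Finset.card_eq_two.mp hbase
      have hsum2 : d a + d b = 2 := by
        rw [Finset.sum_pair hab] at hsum
        rw [hsum, hbase]
      have hda : d a = 1 := by
        have h1 := hpos a (by simp)
        have h2' := hpos b (by simp)
        omega
      have hdb : d b = 1 := by
        have h1 := hpos a (by simp); have h2' := hpos b (by simp); omega
      have hset : ((treesOn ({a, b} : Finset V)).filter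
          (fun T => ∀ i ∈ ({a, b} : Finset V), (T.filter fun e => i ∈ e).card = d i))
          = {({s(a, b)} : Finset (Sym2 V))} := by
        ext T
        simp only [Finset.mem_singleton, Finset.mem_filter]
        constructor
        · rintro ⟨hT, -⟩
          rw [mem_treesOn] at hT
          obtain ⟨hsub, hnd, hconn, hcard⟩ := hT
          rw [hbase] at hcard
          obtain ⟨e, rfl⟩ := Finset.card_eq_one.mp hcard
          have he : e ∈ ({a, b} : Finset V).sym2 := hsub (Finset.mem_singleton_self e)
          have hd := hnd e (Finset.mem_singleton_self e)
          congr 1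
          induction e with
          | _ x y =>
            rw [Finset.mk_mem_sym2_iff] at he
            rw [Sym2.isDiag_iff_proj_eq] at hd
            simp only [Finset.mem_insert, Finset.mem_singleton] at he
            rw [Sym2.eq_iff]
            rcases he.1 with rfl | rfl
            · rcases he.2 with rfl | rfl
              · exact absurd rfl hd
              · exact Or.inl ⟨rfl, rfl⟩
            · rcases he.2 with rfl | rfl
              · exact Or.inr ⟨rfl, rfl⟩
              · exact absurd rfl hd
        · rintro rfl
          refine ⟨mem_treesOn.mpr ⟨?_, ?_, ?_, ?_⟩, ?_⟩
          · intro e he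
            rw [Finset.mem_singleton] at he
            subst he
            rw [Finset.mk_mem_sym2_iff]
            simp
          · intro e he
            rw [Finset.mem_singleton] at he
            subst he
            rw [Sym2.isDiag_iff_proj_eq]
            exact hab
          · have hadj : (SimpleGraph.fromEdgeSet
                (({s(a, b)} : Finset (Sym2 V)) : Set (Sym2 V))).Adj a b := by
              rw [SimpleGraph.fromEdgeSet_adj]
              exact ⟨by simp, hab⟩
            intro x hx y hy
            simp only [Finset.mem_insert, Finset.mem_singleton] at hx hy
            rcases hx with rfl | rfl <;> rcases hy with rfl | rfl
            · rfl
            · exact hadj.reachable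
            · exact hadj.symm.reachable
            · rfl
          · rw [hbase]; simp
          · intro i hi
            simp only [Finset.mem_insert, Finset.mem_singleton] at hi
            have : i ∈ s(a, b) := by rcases hi with rfl | rfl <;> simp
            rw [Finset.filter_singleton, if_pos this]
            rcases hi with rfl | rfl
            · simp [hda]
            · simp [hdb]
      rw [hset, Finset.card_singleton, Nat.binomial_eq_choose hab, hda, hdb]
      simp
    · -- inductive step
      have h3 : 3 ≤ B.card := by omega
      -- find a leaf value
      have hex : ∃ v ∈ B, d v = 1 := by
        by_contra hc
        push_neg at hc
        have hall : ∀ i ∈ B, 2 ≤ d i := fun i hi => by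
          have := hpos i hi; have := hc i hi; omega
        have hle : B.card * 2 ≤ ∑ i ∈ B, d i := Finset.card_nsmul_le_sum B d 2 hall
        omega
      obtain ⟨v, hv, hdv⟩ := hex
      set S := (treesOn B).filter
        (fun T => ∀ i ∈ B, (T.filter fun e => i ∈ e).card = d i) with hS
      have hpart : S = (B.erase v).biUnion (fun w => S.filter (fun T => s(v, w) ∈ T)) := by
        ext T
        simp only [Finset.mem_biUnion, Finset.mem_filter]
        constructor
        · intro hT
          have hT' := hT
          rw [hS, Finset.mem_filter, mem_treesOn] at hT'
          obtain ⟨⟨hsub, hnd, hconn, hcard⟩, hdeg⟩ := hT'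
          have h1 : (T.filter fun e => v ∈ e).card = 1 := by rw [hdeg v hv, hdv]
          obtain ⟨e, he⟩ := Finset.card_eq_one.mp h1
          have heT : e ∈ T.filter fun e => v ∈ e := he ▸ Finset.mem_singleton_self e
          rw [Finset.mem_filter] at heT
          obtain ⟨heT, hve⟩ := heT
          obtain ⟨u, rfl⟩ := Sym2.mem_iff_exists.mp hve
          have huv : v ≠ u := fun hc' => (hnd _ heT) (by rw [Sym2.isDiag_iff_proj_eq]; exact hc')
          have huB : u ∈ B := Finset.mem_sym2_iff.mp (hsub heT) u (Sym2.mem_mk_right v u)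
          exact ⟨u, Finset.mem_erase.mpr ⟨Ne.symm huv, huB⟩, hT, heT⟩
        · rintro ⟨w, -, hT, -⟩
          exact hT
      rw [hpart, Finset.card_biUnion ?disj]
      case disj =>
        intro w1 hw1 w2 hw2 hne
        rw [Function.onFun, Finset.disjoint_left]
        intro T hT1 hT2
        rw [Finset.mem_filter] at hT1 hT2
        obtain ⟨hTS, hm1⟩ := hT1
        obtain ⟨-, hm2⟩ := hT2
        rw [hS, Finset.mem_filter] at hTS
        have h1 : (T.filter fun e => v ∈ e).card = 1 := by rw [hTS.2 v hv, hdv]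
        have hnee : s(v, w1) ≠ s(v, w2) := by
          intro hh
          rw [Sym2.eq_iff] at hh
          rcases hh with ⟨-, h⟩ | ⟨h, -⟩
          · exact hne h
          · exact (Finset.ne_of_mem_erase hw2) h.symm
        have : 1 < (T.filter fun e => v ∈ e).card :=
          Finset.one_lt_card.mpr ⟨s(v, w1), Finset.mem_filter.mpr ⟨hm1, Sym2.mem_mk_left _ _⟩,
            s(v, w2), Finset.mem_filter.mpr ⟨hm2, Sym2.mem_mk_left _ _⟩, hnee⟩
        omega
      -- rewrite each fiber
      have hfib : ∀ w ∈ B.erase v, (S.filter (fun T => s(v, w) ∈ T)).card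
          = ((treesOn (B.erase v)).filter (fun T => ∀ i ∈ B.erase v,
              (T.filter fun e => i ∈ e).card = Function.update d w (d w - 1) i)).card := by
        intro w hw
        have hwB := Finset.mem_of_mem_erase hw
        have hvw : v ≠ w := (Finset.ne_of_mem_erase hw).symm
        rw [hS, Finset.filter_filter]
        exact fiber_card hv hwB hvw d hdv (hpos w hwB)
      rw [Finset.sum_congr rfl hfib]
      -- evaluate each term
      have hcarde : (B.erase v).card = B.card - 1 := Finset.card_erase_of_mem hv
      have hterm : ∀ w ∈ B.erase v, ((treesOn (B.erase v)).filter (fun T => ∀ i ∈ B.erase v,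
              (T.filter fun e => i ∈ e).card = Function.update d w (d w - 1) i)).card
          = if 2 ≤ d w then
              Nat.multinomial (B.erase v) (fun i => Function.update d w (d w - 1) i - 1)
            else 0 := by
        intro w hw
        have hwB := Finset.mem_of_mem_erase hw
        have hsum_erase : ∑ i ∈ B.erase v, d i = 2 * (B.card - 1) - 1 := by
          have := Finset.add_sum_erase B d hv
          omega
        have hsum' : ∑ i ∈ B.erase v, Function.update d w (d w - 1) i
            = ∑ i ∈ B.erase v, d i - 1 := by
          rw [← Finset.add_sum_erase _ _ hw, ← Finset.add_sum_erase (B.erase v) d hw,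
            Function.update_self]
          have : ∑ i ∈ (B.erase v).erase w, Function.update d w (d w - 1) i
              = ∑ i ∈ (B.erase v).erase w, d i :=
            Finset.sum_congr rfl fun i hi =>
              Function.update_of_ne (Finset.ne_of_mem_erase hi) _ _
          have hdw := hpos w hwB
          omega
        by_cases hdw2 : 2 ≤ d w
        · rw [if_pos hdw2]
          refine IH (m - 1) (by omega) _ _ (by omega) (by omega) ?_ ?_
          · intro i hi
            by_cases hiw : i = w
            · subst hiw
              rw [Function.update_self]
              omega
            · rw [Function.update_of_ne hiw]
              exact hpos i (Finset.mem_of_mem_erase hi)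
          · rw [hsum', hsum_erase, hcarde]
            omega
        · rw [if_neg hdw2]
          have hdw1 : d w = 1 := by have := hpos w hwB; omega
          rw [trees_deg_zero_empty (by omega) hw _ (by rw [Function.update_self]; omega)]
          exact Finset.card_empty
      rw [Finset.sum_congr rfl hterm]
      -- now pure multinomial arithmetic
      have hsum_erase : ∑ i ∈ B.erase v, d i = 2 * (B.card - 1) - 1 := by
        have := Finset.add_sum_erase B d hv
        omega
      have hsumf : ∑ i ∈ B.erase v, (d i - 1) = B.card - 2 := by
        have h1 : ∑ i ∈ B.erase v, (d i - 1) + ∑ i ∈ B.erase v, 1 = ∑ i ∈ B.erase v, d i := by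
          rw [← Finset.sum_add_distrib]
          exact Finset.sum_congr rfl fun i hi => by
            have := hpos i (Finset.mem_of_mem_erase hi); omega
        rw [Finset.sum_const, smul_eq_mul, mul_one, hcarde] at h1
        omega
      have hmB : Nat.multinomial B (fun i => d i - 1)
          = Nat.multinomial (B.erase v) (fun i => d i - 1) := by
        conv_lhs => rw [← Finset.insert_erase hv]
        rw [Nat.multinomial_insert (Finset.notMem_erase v B)]
        rw [hdv]
        simp
      rw [hmB, multinomial_rec _ _ (by omega)]
      rw [← Finset.sum_filter]
      refine Finset.sum_congr ?_ ?_
      · apply Finset.filter_congr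
        intro w hw
        have := hpos w (Finset.mem_of_mem_erase hw)
        constructor
        · intro h; omega
        · intro h; omega
      · intro w hw
        rw [Finset.mem_filter] at hw
        apply Nat.multinomial_congr
        intro i hi
        by_cases hiw : i = w
        · subst hiw
          rw [Function.update_self, Function.update_self]
        · rw [Function.update_of_ne hiw, Function.update_of_ne hiw]


/-- The number of trees on `{0, …, n-1}` in which vertex `i` has degree exactly `d i`
(for a positive degree sequence summing to `2(n-1)`) equals `(n-2)! / ∏ᵢ (dᵢ - 1)!`. -/
theorem card_trees_with_degree_sequence (n : ℕ) (hn : 2 ≤ n) (d : Fin n → ℕ)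
    (hpos : ∀ i, 1 ≤ d i) (hsum : ∑ i, d i = 2 * (n - 1)) :
    ((treesOn (Finset.univ : Finset (Fin n))).filter
        (fun T => ∀ i : Fin n, (T.filter fun e => i ∈ e).card = d i)).card
      = Nat.factorial (n - 2) / ∏ i, Nat.factorial (d i - 1) := by
  have hcard : (Finset.univ : Finset (Fin n)).card = n := by simp
  have key := tree_count n (Finset.univ : Finset (Fin n)) d hcard (by omega)
    (fun i _ => hpos i) (by rw [hcard]; exact hsum)
  have hs : ∑ i, (d i - 1) = n - 2 := by
    have h1 : ∑ i, (d i - 1) + ∑ i : Fin n, 1 = ∑ i, d i := by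
      rw [← Finset.sum_add_distrib]
      exact Finset.sum_congr rfl fun i _ => by have := hpos i; omega
    simp only [Finset.sum_const, smul_eq_mul, mul_one, Finset.card_univ,
      Fintype.card_fin] at h1
    omega
  have hm : (Nat.multinomial Finset.univ fun i => d i - 1)
      = Nat.factorial (n - 2) / ∏ i, Nat.factorial (d i - 1) := by
    rw [Nat.multinomial, hs]
  rw [← hm, ← key]
  congr 1
  ext T
  simp only [Finset.mem_filter, Finset.mem_univ, true_implies]
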